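/- Let κ > 0 and ν ∈ (0, 1), and define g(θ) = e^{−κ cos θ} (1 + ν cos θ) (the unnormalized toroidal marginal density with location parameter μ = π). If κ < ν/(1+ν) or κ > ν/(1−ν), then the derivative g′ vanishes at exactly two points of [0, 2π), namely θ = 0 and θ = π (unimodal case). If ν/(1+ν) < κ < ν/(1−ν), then g′ vanishes at exactly four points of [0, 2π), namely θ = 0, θ = π, and the two solutions in (0, 2π) \ {π} of cos θ = (ν − κ)/(κ ν) (bimodal case). -/

import Mathlib

open Real

private lemma deriv_g_eq (κ ν : ℝ) (θ : ℝ) :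
    deriv (fun θ => Real.exp (-κ * Real.cos θ) * (1 + ν * Real.cos θ)) θ
      = Real.exp (-κ * Real.cos θ) * (Real.sin θ * (κ * ν * Real.cos θ + (κ - ν))) := by
  have h1 : HasDerivAt (fun θ : ℝ => -κ * Real.cos θ) (-κ * (-Real.sin θ)) θ :=
    (Real.hasDerivAt_cos θ).const_mul (-κ)
  have h2 := h1.exp
  have h3 : HasDerivAt (fun θ : ℝ => 1 + ν * Real.cos θ) (ν * (-Real.sin θ)) θ :=
    ((Real.hasDerivAt_cos θ).const_mul ν).const_add 1
  have h4 := h2.mul h3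
  rw [show deriv (fun θ => Real.exp (-κ * Real.cos θ) * (1 + ν * Real.cos θ)) θ = _ from h4.deriv]
  ring

private lemma sin_zero_Ico {θ : ℝ} (hθ : θ ∈ Set.Ico (0:ℝ) (2 * π)) :
    Real.sin θ = 0 ↔ θ = 0 ∨ θ = π := by
  constructor
  · intro hs
    obtain ⟨n, hn⟩ := Real.sin_eq_zero_iff.mp hs
    have hπ := Real.pi_pos
    have hn0 : (0:ℝ) ≤ (n:ℝ) := by
      nlinarith [hθ.1, hn]
    have hn2 : (n:ℝ) < 2 := by
      nlinarith [hθ.2, hn]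
    have hn0' : 0 ≤ n := by exact_mod_cast hn0
    have hn2' : n < 2 := by exact_mod_cast hn2
    interval_cases n
    · left; simpa using hn.symm
    · right; simpa using hn.symm
  · rintro (rfl | rfl) <;> simp [Real.sin_pi]

theorem stmt15 (κ ν : ℝ) (hκ : 0 < κ) (hν : ν ∈ Set.Ioo (0:ℝ) 1) :
    -- the unnormalized toroidal marginal density with location parameter μ = π
    let g : ℝ → ℝ := fun θ => Real.exp (-κ * Real.cos θ) * (1 + ν * Real.cos θ)
    -- unimodal case: exactly two critical points, namely 0 and π
    ((κ < ν / (1 + ν) ∨ ν / (1 - ν) < κ) →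
      {θ ∈ Set.Ico (0:ℝ) (2 * π) | deriv g θ = 0} = {0, π}) ∧
    -- bimodal case: exactly four critical points, namely 0, π, and the two
    -- solutions in (0, 2π) \ {π} of cos θ = (ν − κ)/(κν)
    (ν / (1 + ν) < κ → κ < ν / (1 - ν) →
      ({θ ∈ Set.Ico (0:ℝ) (2 * π) | deriv g θ = 0}
          = {0, π} ∪ {θ ∈ Set.Ioo (0:ℝ) (2 * π) | θ ≠ π ∧
              Real.cos θ = (ν - κ) / (κ * ν)} ∧
        ∃ θ₁ θ₂ : ℝ, θ₁ ≠ θ₂ ∧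
          {θ ∈ Set.Ioo (0:ℝ) (2 * π) | θ ≠ π ∧ Real.cos θ = (ν - κ) / (κ * ν)}
            = {θ₁, θ₂})) := by
  intro g
  obtain ⟨hν0, hν1⟩ := hν
  have hπ := Real.pi_pos
  have hκν : κ * ν ≠ 0 := by positivity
  -- derivative vanishing criterion
  have hcrit : ∀ θ, deriv g θ = 0 ↔
      Real.sin θ = 0 ∨ Real.cos θ = (ν - κ) / (κ * ν) := by
    intro θ
    rw [show deriv g θ = _ from deriv_g_eq κ ν θ]
    rw [mul_eq_zero, mul_eq_zero]
    have hexp : Real.exp (-κ * Real.cos θ) ≠ 0 := Real.exp_ne_zero _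
    constructor
    · rintro (h | h | h)
      · exact absurd h hexp
      · exact Or.inl h
      · right
        field_simp
        linarith
    · rintro (h | h)
      · exact Or.inr (Or.inl h)
      · right; right
        rw [h]
        field_simp
        ring
  constructor
  · -- unimodal case
    intro hcase
    ext θ
    simp only [Set.mem_setOf_eq, Set.mem_insert_iff, Set.mem_singleton_iff]
    constructor
    · rintro ⟨hθ, hd⟩
      rcases (hcrit θ).mp hd with hs | hc
      · exact (sin_zero_Ico hθ).mp hs
      · exfalso
        have hcb := Real.neg_one_le_cos θ
        have hcb' := Real.cos_le_one θ
        rcases hcase with h | h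
        · -- κ(1+ν) < ν, so (ν-κ)/(κν) > 1
          have h' : κ * (1 + ν) < ν := by
            rw [lt_div_iff₀ (by linarith)] at h
            linarith
          have : (1:ℝ) < (ν - κ) / (κ * ν) := by
            rw [lt_div_iff₀ (by positivity)]
            nlinarith
          nlinarith [hc ▸ hcb']
        · -- ν < κ(1-ν), so (ν-κ)/(κν) < -1
          have h' : ν < κ * (1 - ν) := by
            rw [div_lt_iff₀ (by linarith)] at h
            linarith
          have : (ν - κ) / (κ * ν) < -1 := by
            rw [div_lt_iff₀ (by positivity)]
            nlinarith
          nlinarith [hc ▸ hcb]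
    · rintro (rfl | rfl)
      · exact ⟨⟨le_refl _, by linarith⟩, (hcrit 0).mpr (Or.inl Real.sin_zero)⟩
      · exact ⟨⟨by linarith, by linarith⟩, (hcrit π).mpr (Or.inl Real.sin_pi)⟩
  · -- bimodal case
    intro h1 h2
    set c : ℝ := (ν - κ) / (κ * ν) with hc
    have h1' : ν < κ * (1 + ν) := by
      rw [div_lt_iff₀ (by linarith)] at h1; linarith
    have h2' : κ * (1 - ν) < ν := by
      rw [lt_div_iff₀ (by linarith)] at h2; linarith
    have hcneg : -1 < c := by
      rw [hc, lt_div_iff₀ (by positivity)]; nlinarith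
    have hcpos : c < 1 := by
      rw [hc, div_lt_iff₀ (by positivity)]; nlinarith
    constructor
    · ext θ
      simp only [Set.mem_setOf_eq, Set.mem_union, Set.mem_insert_iff,
        Set.mem_singleton_iff]
      constructor
      · rintro ⟨hθ, hd⟩
        rcases (hcrit θ).mp hd with hs | hcθ
        · exact Or.inl ((sin_zero_Ico hθ).mp hs)
        · right
          have hθ0 : θ ≠ 0 := by
            rintro rfl
            rw [Real.cos_zero] at hcθ
            linarith [hcθ ▸ hcpos]
          have hθπ : θ ≠ π := by
            rintro rfl
            rw [Real.cos_pi] at hcθ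
            linarith [hcθ ▸ hcneg]
          exact ⟨⟨lt_of_le_of_ne hθ.1 (Ne.symm hθ0), hθ.2⟩, hθπ, hcθ⟩
      · rintro ((rfl | rfl) | ⟨hθ, _, hcθ⟩)
        · exact ⟨⟨le_refl _, by linarith⟩, (hcrit 0).mpr (Or.inl Real.sin_zero)⟩
        · exact ⟨⟨by linarith, by linarith⟩, (hcrit π).mpr (Or.inl Real.sin_pi)⟩
        · exact ⟨⟨le_of_lt hθ.1, hθ.2⟩, (hcrit θ).mpr (Or.inr hcθ)⟩
    · -- the two solutions
      refine ⟨Real.arccos c, 2 * π - Real.arccos c, ?_, ?_⟩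
      · have ha1 : Real.arccos c < π := by
          rcases lt_or_eq_of_le (Real.arccos_le_pi c) with h | h
          · exact h
          · exfalso
            have := Real.cos_arccos (le_of_lt hcneg) (le_of_lt hcpos)
            rw [h, Real.cos_pi] at this
            linarith
        intro heq
        have := Real.arccos_nonneg c
        nlinarith [heq]
      · have ha0 : 0 < Real.arccos c := Real.arccos_pos.mpr hcpos
        have ha1 : Real.arccos c < π := by
          rcases lt_or_eq_of_le (Real.arccos_le_pi c) with h | h
          · exact h
          · exfalso
            have := Real.cos_arccos (le_of_lt hcneg) (le_of_lt hcpos)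
            rw [h, Real.cos_pi] at this
            linarith
        have hca : Real.cos (Real.arccos c) = c :=
          Real.cos_arccos (le_of_lt hcneg) (le_of_lt hcpos)
        ext θ
        simp only [Set.mem_setOf_eq, Set.mem_insert_iff, Set.mem_singleton_iff]
        constructor
        · rintro ⟨⟨hθ0, hθ2⟩, hθπ, hcθ⟩
          rcases le_or_gt θ π with hle | hgt
          · left
            have hθπ' : θ < π := lt_of_le_of_ne hle hθπ
            exact Real.injOn_cos ⟨le_of_lt hθ0, hle⟩
              ⟨Real.arccos_nonneg c, Real.arccos_le_pi c⟩ (hcθ.trans hca.symm)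
          · right
            have h5 : Real.cos (2 * π - θ) = Real.cos θ := by
              rw [Real.cos_sub, Real.cos_two_pi, Real.sin_two_pi]
              ring
            have h6 : 2 * π - θ = Real.arccos c :=
              Real.injOn_cos ⟨by linarith, by linarith⟩
                ⟨Real.arccos_nonneg c, Real.arccos_le_pi c⟩
                (by rw [h5, hcθ, hca])
            linarith [h6]
        · rintro (rfl | rfl)
          · exact ⟨⟨ha0, by linarith⟩, by intro h; linarith [h ▸ ha1], hca⟩
          · refine ⟨⟨by linarith, by linarith⟩, by intro h; linarith, ?_⟩
            rw [Real.cos_sub, Real.cos_two_pi, Real.sin_two_pi]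
            simp [hca]
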